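/- For odd n > 1, the bistochastic matrix J_n with all entries equal to 1/n is (n−1)-orthostochastic. -/

import Mathlib

open scoped RealInnerProductSpace
open Complex Finset Real

lemma aux_sum_ite (m : ℕ) (X Y : ℝ) :
    ∑ t ∈ Finset.range (2*m), (if t % 2 = 0 then X else Y) = m * (X + Y) := by
  induction m with
  | zero => simp
  | succ k ih =>
    have h : 2*(k+1) = (2*k) + 1 + 1 := by ring
    rw [h, Finset.sum_range_succ, Finset.sum_range_succ, ih]
    have h1 : (2*k) % 2 = 0 := by omega
    have h2 : (2*k+1) % 2 = 1 := by omega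
    rw [if_pos h1, if_neg (by omega)]
    push_cast
    ring

lemma aux_sum_exp (n : ℕ) (hn : 0 < n) (d : ℤ) (hd : ¬ (n:ℤ) ∣ d) :
    ∑ i ∈ Finset.range n, Complex.exp ((2*π*(i:ℝ)*(d:ℝ)/n : ℝ) * Complex.I) = 0 := by
  set z : ℂ := Complex.exp ((2*π*(d:ℝ)/n : ℝ) * Complex.I) with hz
  have hne : (n:ℝ) ≠ 0 := by positivity
  have hterm : ∀ i : ℕ, Complex.exp ((2*π*(i:ℝ)*(d:ℝ)/n : ℝ) * Complex.I) = z ^ i := by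
    intro i
    rw [hz, ← Complex.exp_nat_mul]
    congr 1
    push_cast
    ring
  have hz1 : z ≠ 1 := by
    intro h
    rw [hz, Complex.exp_eq_one_iff] at h
    obtain ⟨k, hk⟩ := h
    have hI : ((2*π*(d:ℝ)/n : ℝ) : ℂ) = ((k * (2*π) : ℝ) : ℂ) := by
      have h2 : ((2*π*(d:ℝ)/n : ℝ) : ℂ) * Complex.I = ((k * (2*π) : ℝ) : ℂ) * Complex.I := by
        rw [hk]; push_cast; ring
      exact mul_right_cancel₀ Complex.I_ne_zero h2
    have hR : (2*π*(d:ℝ)/n : ℝ) = (k * (2*π) : ℝ) := by exact_mod_cast hI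
    have hdk : (d:ℝ) = (k:ℝ) * n := by
      field_simp at hR
      nlinarith [Real.pi_ne_zero, Real.pi_pos]
    have : d = k * n := by exact_mod_cast hdk
    exact hd ⟨k, by linarith⟩
  have hzn : z ^ n = 1 := by
    rw [hz, ← Complex.exp_nat_mul]
    have hnc : (n:ℂ) ≠ 0 := by exact_mod_cast hne
    have : (n:ℂ) * (((2*π*(d:ℝ)/n : ℝ) : ℂ) * Complex.I) = (d:ℂ) * (2 * (π:ℂ) * Complex.I) := by
      push_cast
      field_simp
    rw [this, Complex.exp_int_mul_two_pi_mul_I]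
  calc ∑ i ∈ Finset.range n, Complex.exp ((2*π*(i:ℝ)*(d:ℝ)/n : ℝ) * Complex.I)
      = ∑ i ∈ Finset.range n, z ^ i := by exact Finset.sum_congr rfl fun i _ => hterm i
    _ = (z ^ n - 1) / (z - 1) := geom_sum_eq hz1 n
    _ = 0 := by rw [hzn]; simp

lemma aux_sum_cos (n : ℕ) (hn : 0 < n) (d : ℤ) (hd : ¬ (n:ℤ) ∣ d) :
    ∑ i ∈ Finset.range n, Real.cos (2*π*(i:ℝ)*(d:ℝ)/n) = 0 := by
  have h := aux_sum_exp n hn d hd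
  have : ∀ i : ℕ, Real.cos (2*π*(i:ℝ)*(d:ℝ)/n)
      = (Complex.exp ((2*π*(i:ℝ)*(d:ℝ)/n : ℝ) * Complex.I)).re := by
    intro i
    rw [Complex.exp_ofReal_mul_I_re]
  rw [Finset.sum_congr rfl fun i _ => this i, ← Complex.re_sum, h]
  simp

theorem uniform_matrix_is_orthostochastic (n : ℕ) (hn : Odd n) (hn1 : 1 < n) :
    ∃ v : Fin n → Fin n → EuclideanSpace ℝ (Fin (n - 1)),
      (∀ j k : Fin n, ∑ i : Fin n, ⟪v j i, v k i⟫
          = if j = k then 1 else 0) ∧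
      (∀ i j : Fin n, ‖v i j‖ ^ 2 = 1 / n) := by
  obtain ⟨m, hm⟩ := hn
  have hm0 : 0 < m := by omega
  have hn0 : 0 < n := by omega
  have hnm : n - 1 = 2 * m := by omega
  have hnR : (0:ℝ) < n := by exact_mod_cast hn0
  have hn1R : (1:ℝ) < n := by exact_mod_cast hn1
  have hmR : ((n:ℝ) - 1) = 2 * m := by
    have : (n:ℝ) = 2 * m + 1 := by exact_mod_cast hm
    linarith
  set c : ℝ := Real.sqrt (2 / (n * ((n:ℝ) - 1))) with hc
  have hc2 : c ^ 2 = 2 / (n * ((n:ℝ) - 1)) := by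
    rw [hc, Real.sq_sqrt]
    rw [hmR]
    positivity
  have hmc : (m:ℝ) * c ^ 2 = 1 / n := by
    rw [hc2]
    rw [hmR]
    field_simp
  set v : Fin n → Fin n → EuclideanSpace ℝ (Fin (n-1)) := fun j i => WithLp.toLp 2 (fun t : Fin (n-1) =>
      c * (if (t:ℕ) % 2 = 0 then Real.cos (2*π*(i:ℝ)*(j:ℝ)/n)
           else Real.sin (2*π*(i:ℝ)*(j:ℝ)/n))) with hv
  have key : ∀ j k i : Fin n, ⟪v j i, v k i⟫
      = (m:ℝ) * c^2 * Real.cos (2*π*(i:ℝ)*((j:ℝ)-(k:ℝ))/n) := by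
    intro j k i
    set a : ℝ := 2*π*(i:ℝ)*(j:ℝ)/n with ha
    set b : ℝ := 2*π*(i:ℝ)*(k:ℝ)/n with hb
    have h1 : ⟪v j i, v k i⟫ = ∑ t : Fin (n-1),
        (c * (if (t:ℕ) % 2 = 0 then Real.cos a else Real.sin a))
        * (c * (if (t:ℕ) % 2 = 0 then Real.cos b else Real.sin b)) := by
      rw [hv]
      simp [PiLp.inner_apply, RCLike.inner_apply, conj_trivial]
      rw [ha, hb]
      refine Finset.sum_congr rfl fun t _ => ?_
      split_ifs <;> ring
    rw [h1]
    have h2 : ∀ t : ℕ,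
        (c * (if t % 2 = 0 then Real.cos a else Real.sin a))
        * (c * (if t % 2 = 0 then Real.cos b else Real.sin b))
        = (if t % 2 = 0 then c^2 * (Real.cos a * Real.cos b)
           else c^2 * (Real.sin a * Real.sin b)) := by
      intro t
      split_ifs <;> ring
    rw [Fin.sum_univ_eq_sum_range (fun t : ℕ =>
        (c * (if t % 2 = 0 then Real.cos a else Real.sin a))
        * (c * (if t % 2 = 0 then Real.cos b else Real.sin b)))]
    rw [Finset.sum_congr rfl fun t _ => h2 t, hnm, aux_sum_ite]
    have h3 : Real.cos a * Real.cos b + Real.sin a * Real.sin b = Real.cos (a - b) := by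
      rw [Real.cos_sub]
    have h4 : a - b = 2*π*(i:ℝ)*((j:ℝ)-(k:ℝ))/n := by rw [ha, hb]; ring
    rw [show (2*π*(i:ℝ)*((j:ℝ)-(k:ℝ))/n) = a - b from h4.symm, ← h3]
    ring
  refine ⟨v, ?_, ?_⟩
  · intro j k
    by_cases hjk : j = k
    · subst hjk
      rw [if_pos rfl]
      have : ∀ i : Fin n, ⟪v j i, v j i⟫ = (1:ℝ)/n := by
        intro i
        rw [key j j i]
        simp [hmc]
      rw [Finset.sum_congr rfl fun i _ => this i]
      simp
      field_simp
    · rw [if_neg hjk]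
      have hd : ¬ (n:ℤ) ∣ ((j:ℤ) - (k:ℤ)) := by
        intro ⟨e, he⟩
        have hj2 : ((j:ℕ):ℤ) < (n:ℤ) := by exact_mod_cast j.isLt
        have hk2 : ((k:ℕ):ℤ) < (n:ℤ) := by exact_mod_cast k.isLt
        have hj1 : (0:ℤ) ≤ ((j:ℕ):ℤ) := Int.ofNat_nonneg _
        have hk1 : (0:ℤ) ≤ ((k:ℕ):ℤ) := Int.ofNat_nonneg _
        have hn0' : (0:ℤ) < (n:ℤ) := by exact_mod_cast hn0
        have hne' : ((j:ℕ):ℤ) ≠ ((k:ℕ):ℤ) := by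
          simp only [ne_eq, Int.ofNat_inj]
          exact fun h => hjk (Fin.ext h)
        rcases lt_trichotomy e 0 with h|h|h
        · have h5 : (n:ℤ)*e ≤ -n := by nlinarith
          linarith
        · rw [h, mul_zero] at he
          omega
        · have h5 : (n:ℤ) ≤ (n:ℤ)*e := by nlinarith
          linarith
      have hcos := aux_sum_cos n hn0 ((j:ℤ) - (k:ℤ)) hd
      have hcast : ∀ i : ℕ, ((j:ℝ) - (k:ℝ)) = ((((j:ℤ) - (k:ℤ)):ℤ):ℝ) := by
        intro _; push_cast; ring
      calc ∑ i : Fin n, ⟪v j i, v k i⟫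
          = ∑ i : Fin n, (m:ℝ) * c^2 * Real.cos (2*π*(i:ℝ)*((((j:ℤ) - (k:ℤ)):ℤ):ℝ)/n) := by
            refine Finset.sum_congr rfl fun i _ => ?_
            rw [key j k i, ← hcast i]
        _ = (m:ℝ) * c^2 * ∑ i : Fin n, Real.cos (2*π*(i:ℝ)*((((j:ℤ) - (k:ℤ)):ℤ):ℝ)/n) := by
            rw [Finset.mul_sum]
        _ = 0 := by
            rw [Fin.sum_univ_eq_sum_range (fun i : ℕ =>
              Real.cos (2*π*(i:ℝ)*((((j:ℤ) - (k:ℤ)):ℤ):ℝ)/n)), hcos, mul_zero]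
  · intro i j
    have h := key i i j
    rw [sub_self, mul_zero, zero_div, Real.cos_zero, mul_one, hmc] at h
    rw [← real_inner_self_eq_norm_sq, h]
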